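/- arXiv:1804.07849 — 2 statements merged into one kernel-verified Lean document; each statement's English description precedes it below -/
import Mathlib

section
/- Let l_N(θ) = Ĥ_θ(q,p) − Ĥ_θ(Z) be the negative empirical variational objective, where Ĥ_θ(q,p) = (1/N)·Σ_{i=1}^N ( − Σ_{z=1}^m q_θ(z|y_i) · ln p(z|x_i) ) and Ĥ_θ(Z) = − Σ_{z=1}^m q̂_θ(z) · ln q̂_θ(z), and for each minibatch k let l_k(θ) be the same quantity computed only from the examples in B_k (using the minibatch estimates q̂_{k,θ} in place of q̂_θ). Then for every θ the bias of the average minibatch gradient satisfies ∇l_N(θ) − (1/K)·Σ_{k=1}^K ∇l_k(θ) = (1/K)·Σ_{k=1}^K Σ_{z=1}^m ln( q̂_θ(z) / q̂_{k,θ}(z) ) · ∇q̂_{k,θ}(z). -/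
lemma entropy_hasFDeriv {d m : ℕ} {F : (Fin d → ℝ) → Fin m → ℝ}
    {θ : Fin d → ℝ} {F' : Fin m → (Fin d → ℝ) →L[ℝ] ℝ}
    (hdiff : ∀ z, HasFDerivAt (fun θ' => F θ' z) (F' z) θ)
    (hpos : ∀ z, 0 < F θ z) (hsum : ∀ θ', ∑ z, F θ' z = 1) :
    HasFDerivAt (fun θ' => ∑ z, F θ' z * Real.log (F θ' z))
      (∑ z, Real.log (F θ z) • F' z) θ := by
  have hz : ∀ z, HasFDerivAt (fun θ' => F θ' z * Real.log (F θ' z))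
      (F' z + Real.log (F θ z) • F' z) θ := by
    intro z
    have h := (hdiff z).mul ((hdiff z).log (hpos z).ne')
    have : F θ z • ((F θ z)⁻¹ • F' z) = F' z := by
      rw [smul_smul, mul_inv_cancel₀ (hpos z).ne', one_smul]
    rwa [this] at h
  have hsum' : HasFDerivAt (fun θ' => ∑ z, F θ' z * Real.log (F θ' z))
      (∑ z, (F' z + Real.log (F θ z) • F' z)) θ :=
    HasFDerivAt.fun_sum (fun z _ => hz z)
  have hzero : (∑ z, F' z) = 0 := by
    have h1 : HasFDerivAt (fun θ' => ∑ z, F θ' z) (∑ z, F' z) θ :=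
      HasFDerivAt.fun_sum (fun z _ => hdiff z)
    have h2 : (fun θ' : Fin d → ℝ => ∑ z, F θ' z) = fun _ => (1 : ℝ) :=
      funext fun θ' => hsum θ'
    rw [h2] at h1
    exact h1.unique (hasFDerivAt_const 1 θ)
  rwa [Finset.sum_add_distrib, hzero, zero_add] at hsum'

lemma partition_smul {N M K : ℕ} (hNMK : N = M * K) (hM : 1 ≤ M) (hK : 1 ≤ K)
    {G : Type*} [AddCommGroup G] [Module ℝ G]
    (B : Fin K → Finset (Fin N))
    (hBdisj : ∀ k k', k ≠ k' → Disjoint (B k) (B k'))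
    (hBcover : Finset.univ.biUnion B = (Finset.univ : Finset (Fin N)))
    (v : Fin N → G) :
    (1 / (N : ℝ)) • ∑ i, v i
      = (1 / (K : ℝ)) • ∑ k, (1 / (M : ℝ)) • ∑ i ∈ B k, v i := by
  have hM0 : (M : ℝ) ≠ 0 := Nat.cast_ne_zero.2 (by omega)
  have hK0 : (K : ℝ) ≠ 0 := Nat.cast_ne_zero.2 (by omega)
  have hsplit : ∑ i, v i = ∑ k, ∑ i ∈ B k, v i := by
    rw [← hBcover, Finset.sum_biUnion]
    intro k _ k' _ hkk'
    exact hBdisj k k' hkk'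
  rw [hsplit]
  have : ∑ k, (1 / (M : ℝ)) • ∑ i ∈ B k, v i
      = (1 / (M : ℝ)) • ∑ k, ∑ i ∈ B k, v i := (Finset.smul_sum).symm
  rw [this, smul_smul]
  congr 1
  subst hNMK
  push_cast
  field_simp

/-- The bias of the average minibatch gradient for the negative
empirical variational objective `l_N = Ĥ(q,p) − Ĥ(Z)` is
`(1/K)·Σ_k Σ_z ln(q̂(z)/q̂_k(z))·∇q̂_k(z)`. -/
theorem variational_bias
    {𝒳 𝒴 : Type} [Fintype 𝒳] [Fintype 𝒴]
    (m d N M K : ℕ) (hm : 1 ≤ m) (hd : 1 ≤ d) (hN : 1 ≤ N) (hM : 1 ≤ M) (hK : 1 ≤ K)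
    (hNMK : N = M * K)
    (x : Fin N → 𝒳) (y : Fin N → 𝒴)
    (B : Fin K → Finset (Fin N))
    (hBcard : ∀ k, (B k).card = M)
    (hBdisj : ∀ k k', k ≠ k' → Disjoint (B k) (B k'))
    (hBcover : Finset.univ.biUnion B = (Finset.univ : Finset (Fin N)))
    (q : (Fin d → ℝ) → 𝒴 → Fin m → ℝ)
    (hqdiff : ∀ w z, Differentiable ℝ (fun θ => q θ w z))
    (hqpos : ∀ θ w z, 0 < q θ w z)
    (hqsum : ∀ θ w, ∑ z, q θ w z = 1)
    (p : 𝒳 → Fin m → ℝ)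
    (hppos : ∀ c z, 0 < p c z)
    (hpsum : ∀ c, ∑ z, p c z = 1)
    (qhat : (Fin d → ℝ) → Fin m → ℝ)
    (hqhat : ∀ θ z, qhat θ z = (1 / (N : ℝ)) * ∑ i, q θ (y i) z)
    (qhatk : Fin K → (Fin d → ℝ) → Fin m → ℝ)
    (hqhatk : ∀ k θ z, qhatk k θ z = (1 / (M : ℝ)) * ∑ i ∈ B k, q θ (y i) z)
    (lN : (Fin d → ℝ) → ℝ)
    (hlN : ∀ θ, lN θ =
      (1 / (N : ℝ)) * ∑ i, (- ∑ z, q θ (y i) z * Real.log (p (x i) z))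
      - (- ∑ z, qhat θ z * Real.log (qhat θ z)))
    (lk : Fin K → (Fin d → ℝ) → ℝ)
    (hlk : ∀ k θ, lk k θ =
      (1 / (M : ℝ)) * ∑ i ∈ B k, (- ∑ z, q θ (y i) z * Real.log (p (x i) z))
      - (- ∑ z, qhatk k θ z * Real.log (qhatk k θ z)))
    (θ : Fin d → ℝ) :
    fderiv ℝ lN θ - (1 / (K : ℝ)) • ∑ k, fderiv ℝ (lk k) θ
      = (1 / (K : ℝ)) • ∑ k, ∑ z,
          Real.log (qhat θ z / qhatk k θ z) • fderiv ℝ (fun θ' => qhatk k θ' z) θ := by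
  have hN0 : (0 : ℝ) < (N : ℝ) := by exact_mod_cast Nat.lt_of_lt_of_le Nat.zero_lt_one hN
  have hM0 : (0 : ℝ) < (M : ℝ) := by exact_mod_cast Nat.lt_of_lt_of_le Nat.zero_lt_one hM
  have hK0 : (0 : ℝ) < (K : ℝ) := by exact_mod_cast Nat.lt_of_lt_of_le Nat.zero_lt_one hK
  have hNe : Nonempty (Fin N) := ⟨⟨0, hN⟩⟩
  have hBne : ∀ k, (B k).Nonempty := fun k =>
    Finset.card_pos.mp (by rw [hBcard k]; omega)
  -- derivatives of q
  set Dq : Fin N → Fin m → (Fin d → ℝ) →L[ℝ] ℝ :=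
    fun i z => fderiv ℝ (fun θ' => q θ' (y i) z) θ with hDqdef
  have hDq : ∀ i z, HasFDerivAt (fun θ' => q θ' (y i) z) (Dq i z) θ :=
    fun i z => ((hqdiff (y i) z) θ).hasFDerivAt
  -- derivatives of qhat, qhatk
  set Dqh : Fin m → (Fin d → ℝ) →L[ℝ] ℝ :=
    fun z => (1 / (N : ℝ)) • ∑ i, Dq i z with hDqhdef
  have hqhat' : ∀ z, HasFDerivAt (fun θ' => qhat θ' z) (Dqh z) θ := by
    intro z
    have h : (fun θ' => qhat θ' z) = fun θ' => (1 / (N : ℝ)) * ∑ i, q θ' (y i) z :=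
      funext fun θ' => hqhat θ' z
    rw [h]
    exact (HasFDerivAt.fun_sum fun i _ => hDq i z).const_mul _
  set Dqhk : Fin K → Fin m → (Fin d → ℝ) →L[ℝ] ℝ :=
    fun k z => (1 / (M : ℝ)) • ∑ i ∈ B k, Dq i z with hDqhkdef
  have hqhatk' : ∀ k z, HasFDerivAt (fun θ' => qhatk k θ' z) (Dqhk k z) θ := by
    intro k z
    have h : (fun θ' => qhatk k θ' z) = fun θ' => (1 / (M : ℝ)) * ∑ i ∈ B k, q θ' (y i) z :=
      funext fun θ' => hqhatk k θ' z
    rw [h]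
    exact (HasFDerivAt.fun_sum fun i _ => hDq i z).const_mul _
  -- positivity and normalization of qhat, qhatk
  have hqhpos : ∀ θ' z, 0 < qhat θ' z := by
    intro θ' z
    rw [hqhat]
    exact mul_pos (by positivity) (Finset.sum_pos (fun i _ => hqpos θ' (y i) z)
      Finset.univ_nonempty)
  have hqhkpos : ∀ k θ' z, 0 < qhatk k θ' z := by
    intro k θ' z
    rw [hqhatk]
    exact mul_pos (by positivity) (Finset.sum_pos (fun i _ => hqpos θ' (y i) z) (hBne k))
  have hqhsum : ∀ θ', ∑ z, qhat θ' z = 1 := by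
    intro θ'
    simp only [hqhat, ← Finset.mul_sum]
    rw [Finset.sum_comm]
    simp only [hqsum]
    simp [Finset.sum_const, hN0.ne']
  have hqhksum : ∀ k θ', ∑ z, qhatk k θ' z = 1 := by
    intro k θ'
    simp only [hqhatk, ← Finset.mul_sum]
    rw [Finset.sum_comm]
    simp only [hqsum]
    rw [Finset.sum_const, hBcard k]
    simp [hM0.ne']
  -- entropy derivatives
  have hEntN : HasFDerivAt (fun θ' => ∑ z, qhat θ' z * Real.log (qhat θ' z))
      (∑ z, Real.log (qhat θ z) • Dqh z) θ :=
    entropy_hasFDeriv hqhat' (fun z => hqhpos θ z) hqhsum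
  have hEntK : ∀ k, HasFDerivAt (fun θ' => ∑ z, qhatk k θ' z * Real.log (qhatk k θ' z))
      (∑ z, Real.log (qhatk k θ z) • Dqhk k z) θ :=
    fun k => entropy_hasFDeriv (hqhatk' k) (fun z => hqhkpos k θ z) (hqhksum k)
  -- cross-entropy derivatives
  set CEi : Fin N → (Fin d → ℝ) →L[ℝ] ℝ :=
    fun i => -∑ z, Real.log (p (x i) z) • Dq i z with hCEidef
  have hCEi : ∀ i, HasFDerivAt (fun θ' => -∑ z, q θ' (y i) z * Real.log (p (x i) z))
      (CEi i) θ :=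
    fun i => (HasFDerivAt.fun_sum fun z _ => (hDq i z).mul_const _).neg
  have hCEN : HasFDerivAt
      (fun θ' => (1 / (N : ℝ)) * ∑ i, (-∑ z, q θ' (y i) z * Real.log (p (x i) z)))
      ((1 / (N : ℝ)) • ∑ i, CEi i) θ :=
    (HasFDerivAt.fun_sum fun i _ => hCEi i).const_mul _
  have hCEK : ∀ k, HasFDerivAt
      (fun θ' => (1 / (M : ℝ)) * ∑ i ∈ B k, (-∑ z, q θ' (y i) z * Real.log (p (x i) z)))
      ((1 / (M : ℝ)) • ∑ i ∈ B k, CEi i) θ :=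
    fun k => (HasFDerivAt.fun_sum fun i _ => hCEi i).const_mul _
  -- derivative of lN
  have hlN' : HasFDerivAt lN
      ((1 / (N : ℝ)) • ∑ i, CEi i + ∑ z, Real.log (qhat θ z) • Dqh z) θ := by
    have h : lN = fun θ' =>
        (1 / (N : ℝ)) * ∑ i, (-∑ z, q θ' (y i) z * Real.log (p (x i) z))
        - (-∑ z, qhat θ' z * Real.log (qhat θ' z)) := funext hlN
    rw [h]
    have := hCEN.sub hEntN.neg
    rwa [sub_neg_eq_add ((1 / (N : ℝ)) • ∑ i, CEi i)] at this
  have hlk' : ∀ k, HasFDerivAt (lk k)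
      ((1 / (M : ℝ)) • ∑ i ∈ B k, CEi i + ∑ z, Real.log (qhatk k θ z) • Dqhk k z) θ := by
    intro k
    have h : lk k = fun θ' =>
        (1 / (M : ℝ)) * ∑ i ∈ B k, (-∑ z, q θ' (y i) z * Real.log (p (x i) z))
        - (-∑ z, qhatk k θ' z * Real.log (qhatk k θ' z)) := funext (hlk k)
    rw [h]
    have := (hCEK k).sub (hEntK k).neg
    rwa [sub_neg_eq_add ((1 / (M : ℝ)) • ∑ i ∈ B k, CEi i)] at this
  -- rewrite all the fderivs
  rw [hlN'.fderiv]
  have hfk : ∀ k, fderiv ℝ (lk k) θ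
      = (1 / (M : ℝ)) • ∑ i ∈ B k, CEi i + ∑ z, Real.log (qhatk k θ z) • Dqhk k z :=
    fun k => (hlk' k).fderiv
  simp only [hfk, fun k z => (hqhatk' k z).fderiv]
  -- log of quotient
  have hlogdiv : ∀ k z, Real.log (qhat θ z / qhatk k θ z)
      = Real.log (qhat θ z) - Real.log (qhatk k θ z) :=
    fun k z => Real.log_div (hqhpos θ z).ne' (hqhkpos k θ z).ne'
  simp only [hlogdiv, sub_smul]
  -- partition identities
  have hCEpart : (1 / (N : ℝ)) • ∑ i, CEi i
      = (1 / (K : ℝ)) • ∑ k, (1 / (M : ℝ)) • ∑ i ∈ B k, CEi i :=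
    partition_smul hNMK hM hK B hBdisj hBcover CEi
  have hDpart : ∀ z, Dqh z = (1 / (K : ℝ)) • ∑ k, Dqhk k z := by
    intro z
    simpa [hDqhdef, hDqhkdef] using
      partition_smul hNMK hM hK B hBdisj hBcover (fun i => Dq i z)
  -- final algebra
  have e1 : ∑ z, Real.log (qhat θ z) • Dqh z
      = (1 / (K : ℝ)) • ∑ k, ∑ z, Real.log (qhat θ z) • Dqhk k z := by
    calc ∑ z, Real.log (qhat θ z) • Dqh z
        = ∑ z, (1 / (K : ℝ)) • ∑ k, Real.log (qhat θ z) • Dqhk k z := by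
          refine Finset.sum_congr rfl fun z _ => ?_
          rw [hDpart z, smul_comm, Finset.smul_sum]
      _ = (1 / (K : ℝ)) • ∑ z, ∑ k, Real.log (qhat θ z) • Dqhk k z :=
          (Finset.smul_sum).symm
      _ = (1 / (K : ℝ)) • ∑ k, ∑ z, Real.log (qhat θ z) • Dqhk k z := by
          rw [Finset.sum_comm]
  rw [hCEpart, e1, ← smul_add, ← smul_sub]
  congr 1
  simp only [Finset.sum_add_distrib, Finset.sum_sub_distrib]
  rw [add_sub_add_left_eq_sub, ← Finset.sum_sub_distrib]
  refine Finset.sum_congr rfl fun k _ => ?_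
  rw [← Finset.sum_sub_distrib]
  refine Finset.sum_congr rfl fun z _ => ?_
  exact (sub_smul _ _ _).symm
end

section
/- Let l_N(θ) = (1/N)·Σ_{i=1}^N Σ_{z=1}^m Σ_{z'=1}^m p(z|x_i)·q_θ(z'|y_i)·ln( p̂(z)·q̂_θ(z') / ( p(z|x_i)·q_θ(z'|y_i) ) ) be the negative empirical generalized Brown objective, and for each minibatch k let l_k(θ) be the same quantity computed only from the examples in B_k (using the minibatch estimates p̂_k and q̂_{k,θ} in place of p̂ and q̂_θ). Then for every θ the bias of the average minibatch gradient satisfies ∇l_N(θ) − (1/K)·Σ_{k=1}^K ∇l_k(θ) = (1/N)·Σ_{k=1}^K Σ_{z=1}^m Σ_{z'=1}^m ( ε_k(z,z')·∇q̂_{k,θ}(z') + ln( p̂(z)·q̂_θ(z') / ( p̂_k(z)·q̂_{k,θ}(z') ) ) · Σ_{i∈B_k} p(z|x_i)·∇q_θ(z'|y_i) ), where ε_k(z,z') = (1/K)·Σ_{i=1}^N p(z|x_i)·q_θ(z'|y_i)/q̂_θ(z') − Σ_{i∈B_k} p(z|x_i)·q_θ(z'|y_i)/q̂_{k,θ}(z').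 -/
lemma brown_aux {E : Type*} [NormedAddCommGroup E] [NormedSpace ℝ E]
    {g h : E → ℝ} {Dg Dh : E →L[ℝ] ℝ} {θ : E} {a c : ℝ}
    (ha : 0 < a) (hc : 0 < c)
    (hgpos : ∀ t, 0 < g t) (hhpos : ∀ t, 0 < h t)
    (hg : HasFDerivAt g Dg θ) (hh : HasFDerivAt h Dh θ) :
    HasFDerivAt (fun t => a * g t * Real.log (c * h t / (a * g t)))
      ((a * Real.log (c * h θ / (a * g θ)) - a) • Dg + (a * g θ / h θ) • Dh) θ := by
  have heq : (fun t => a * g t * Real.log (c * h t / (a * g t)))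
      = fun t => a * g t * (Real.log (c * h t) - Real.log (a * g t)) := by
    funext t
    rw [Real.log_div (by have := hhpos t; positivity) (by have := hgpos t; positivity)]
  rw [heq]
  have h1 : HasFDerivAt (fun t => Real.log (c * h t)) ((c * h θ)⁻¹ • (c • Dh)) θ :=
    (hh.const_mul c).log (by have := hhpos θ; positivity)
  have h2 : HasFDerivAt (fun t => Real.log (a * g t)) ((a * g θ)⁻¹ • (a • Dg)) θ :=
    (hg.const_mul a).log (by have := hgpos θ; positivity)
  have h3 := (hg.const_mul a).mul (h1.sub h2)
  refine h3.congr_fderiv ?_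
  ext v
  have hg0 := hgpos θ
  have hh0 := hhpos θ
  simp only [ContinuousLinearMap.add_apply, ContinuousLinearMap.smul_apply,
    ContinuousLinearMap.coe_sub', Pi.sub_apply, smul_eq_mul]
  rw [Real.log_div (by positivity) (by positivity)]
  field_simp
  ring


lemma brown_key {ι ζ : Type*} [Fintype ι] [Fintype ζ] {K : ℕ}
    (N M : ℕ) (hM0 : 0 < (M:ℝ)) (hK0 : 0 < (K:ℝ)) (hN : (N:ℝ) = M * K)
    (B : Fin K → Finset ι)
    (hpart : ∀ φ : ι → ℝ, ∑ i, φ i = ∑ k, ∑ i ∈ B k, φ i)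
    (a g f : ι → ζ → ℝ)
    (P Q : ζ → ℝ) (Pk Qk : Fin K → ζ → ℝ)
    (hapos : ∀ i z, 0 < a i z) (hgpos : ∀ i z, 0 < g i z)
    (hP : ∀ z, 0 < P z) (hQ : ∀ z, 0 < Q z)
    (hPk : ∀ k z, 0 < Pk k z) (hQk : ∀ k z, 0 < Qk k z) :
    (1/(N:ℝ)) * ∑ i, ∑ z, ∑ z',
        ((a i z * Real.log (P z * Q z' / (a i z * g i z')) - a i z) * f i z'
          + (a i z * g i z' / Q z') * ((1/(N:ℝ)) * ∑ j, f j z'))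
      - (1/(K:ℝ)) * ∑ k, ((1/(M:ℝ)) * ∑ i ∈ B k, ∑ z, ∑ z',
        ((a i z * Real.log (Pk k z * Qk k z' / (a i z * g i z')) - a i z) * f i z'
          + (a i z * g i z' / Qk k z') * ((1/(M:ℝ)) * ∑ j ∈ B k, f j z')))
    = (1/(N:ℝ)) * ∑ k, ∑ z, ∑ z',
        (((1/(K:ℝ)) * ∑ i, a i z * g i z' / Q z' - ∑ i ∈ B k, a i z * g i z' / Qk k z')
            * ((1/(M:ℝ)) * ∑ j ∈ B k, f j z')
          + Real.log (P z * Q z' / (Pk k z * Qk k z')) * ∑ i ∈ B k, a i z * f i z') := by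
  have hN0 : 0 < (N:ℝ) := by rw [hN]; positivity
  have hsumFk : ∀ z' : ζ, ∑ k, ((1/(M:ℝ)) * ∑ j ∈ B k, f j z')
      = (K:ℝ) * ((1/(N:ℝ)) * ∑ j, f j z') := by
    intro z'
    rw [← Finset.mul_sum, ← hpart (f · z'), hN]
    field_simp
  have hmid : ∀ S : Fin K → ℝ, (1/(K:ℝ)) * ∑ k, ((1/(M:ℝ)) * S k)
      = (1/(N:ℝ)) * ∑ k, S k := by
    intro S
    rw [← Finset.mul_sum, ← mul_assoc, hN]
    congr 1
    rw [div_mul_div_comm, one_mul, mul_comm (K:ℝ) (M:ℝ)]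
  rw [hmid, hpart, ← mul_sub]
  congr 1
  rw [← sub_eq_zero, ← Finset.sum_sub_distrib, ← Finset.sum_sub_distrib]
  have hAk : ∀ k : Fin K, ((∑ i ∈ B k, ∑ z, ∑ z',
        ((a i z * Real.log (P z * Q z' / (a i z * g i z')) - a i z) * f i z'
          + (a i z * g i z' / Q z') * ((1/(N:ℝ)) * ∑ j, f j z')))
      - (∑ i ∈ B k, ∑ z, ∑ z',
        ((a i z * Real.log (Pk k z * Qk k z' / (a i z * g i z')) - a i z) * f i z'
          + (a i z * g i z' / Qk k z') * ((1/(M:ℝ)) * ∑ j ∈ B k, f j z'))))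
      - (∑ z, ∑ z',
        (((1/(K:ℝ)) * ∑ i, a i z * g i z' / Q z' - ∑ i ∈ B k, a i z * g i z' / Qk k z')
            * ((1/(M:ℝ)) * ∑ j ∈ B k, f j z')
          + Real.log (P z * Q z' / (Pk k z * Qk k z')) * ∑ i ∈ B k, a i z * f i z'))
      = ∑ z, ∑ z', ((∑ i ∈ B k, a i z * g i z') * (((1/(N:ℝ)) * ∑ j, f j z') / Q z')
          - (1/(K:ℝ)) * ((∑ i, a i z * g i z') / Q z')
              * ((1/(M:ℝ)) * ∑ j ∈ B k, f j z')) := by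
    intro k
    have hterm : ∀ i ∈ B k, ((∑ z, ∑ z',
        ((a i z * Real.log (P z * Q z' / (a i z * g i z')) - a i z) * f i z'
          + (a i z * g i z' / Q z') * ((1/(N:ℝ)) * ∑ j, f j z')))
      - (∑ z, ∑ z',
        ((a i z * Real.log (Pk k z * Qk k z' / (a i z * g i z')) - a i z) * f i z'
          + (a i z * g i z' / Qk k z') * ((1/(M:ℝ)) * ∑ j ∈ B k, f j z'))))
      = ∑ z, ∑ z',
          (Real.log (P z * Q z' / (Pk k z * Qk k z')) * (a i z * f i z')
            + (a i z * g i z') * (((1/(N:ℝ)) * ∑ j, f j z') / Q z')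
            - (a i z * g i z') * (((1/(M:ℝ)) * ∑ j ∈ B k, f j z') / Qk k z')) := by
      intro i _
      rw [← Finset.sum_sub_distrib]
      refine Finset.sum_congr rfl fun z _ => ?_
      rw [← Finset.sum_sub_distrib]
      refine Finset.sum_congr rfl fun z' _ => ?_
      have h1 : Real.log (P z * Q z' / (a i z * g i z'))
          = Real.log (P z * Q z') - Real.log (a i z * g i z') :=
        Real.log_div (by have := hP z; have := hQ z'; positivity)
          (by have := hapos i z; have := hgpos i z'; positivity)
      have h2 : Real.log (Pk k z * Qk k z' / (a i z * g i z'))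
          = Real.log (Pk k z * Qk k z') - Real.log (a i z * g i z') :=
        Real.log_div (by have := hPk k z; have := hQk k z'; positivity)
          (by have := hapos i z; have := hgpos i z'; positivity)
      have h3 : Real.log (P z * Q z' / (Pk k z * Qk k z'))
          = Real.log (P z * Q z') - Real.log (Pk k z * Qk k z') :=
        Real.log_div (by have := hP z; have := hQ z'; positivity)
          (by have := hPk k z; have := hQk k z'; positivity)
      rw [h1, h2, h3]
      ring
    rw [← Finset.sum_sub_distrib, Finset.sum_congr rfl hterm]
    have hswap : ∀ W : ι → ζ → ζ → ℝ, ∑ i ∈ B k, ∑ z, ∑ z', W i z z'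
        = ∑ z, ∑ z', ∑ i ∈ B k, W i z z' := by
      intro W
      rw [Finset.sum_comm]
      exact Finset.sum_congr rfl fun z _ => Finset.sum_comm
    rw [hswap]
    rw [← Finset.sum_sub_distrib]
    refine Finset.sum_congr rfl fun z _ => ?_
    rw [← Finset.sum_sub_distrib]
    refine Finset.sum_congr rfl fun z' _ => ?_
    rw [Finset.sum_sub_distrib, Finset.sum_add_distrib, ← Finset.mul_sum,
      ← Finset.sum_mul, ← Finset.sum_mul, ← Finset.sum_div, ← Finset.sum_div]
    ring
  rw [Finset.sum_congr rfl fun k _ => hAk k]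
  rw [Finset.sum_comm]
  refine Finset.sum_eq_zero fun z _ => ?_
  rw [Finset.sum_comm]
  refine Finset.sum_eq_zero fun z' _ => ?_
  rw [Finset.sum_sub_distrib, ← Finset.sum_mul, ← Finset.mul_sum,
    ← hpart (fun i => a i z * g i z'), hsumFk z']
  have hQ0 := (hQ z').ne'
  field_simp
  ring




/-- The bias of the average minibatch gradient for the negative
empirical generalized Brown objective. -/
theorem generalized_brown_bias
    {𝒳 𝒴 : Type} [Fintype 𝒳] [Fintype 𝒴]
    (m d N M K : ℕ) (hm : 1 ≤ m) (hd : 1 ≤ d) (hN : 1 ≤ N) (hM : 1 ≤ M) (hK : 1 ≤ K)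
    (hNMK : N = M * K)
    (x : Fin N → 𝒳) (y : Fin N → 𝒴)
    (B : Fin K → Finset (Fin N))
    (hBcard : ∀ k, (B k).card = M)
    (hBdisj : ∀ k k', k ≠ k' → Disjoint (B k) (B k'))
    (hBcover : Finset.univ.biUnion B = (Finset.univ : Finset (Fin N)))
    (q : (Fin d → ℝ) → 𝒴 → Fin m → ℝ)
    (hqdiff : ∀ w z, Differentiable ℝ (fun θ => q θ w z))
    (hqpos : ∀ θ w z, 0 < q θ w z)
    (hqsum : ∀ θ w, ∑ z, q θ w z = 1)
    (p : 𝒳 → Fin m → ℝ)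
    (hppos : ∀ c z, 0 < p c z)
    (hpsum : ∀ c, ∑ z, p c z = 1)
    (qhat : (Fin d → ℝ) → Fin m → ℝ)
    (hqhat : ∀ θ z, qhat θ z = (1 / (N : ℝ)) * ∑ i, q θ (y i) z)
    (qhatk : Fin K → (Fin d → ℝ) → Fin m → ℝ)
    (hqhatk : ∀ k θ z, qhatk k θ z = (1 / (M : ℝ)) * ∑ i ∈ B k, q θ (y i) z)
    (phat : Fin m → ℝ)
    (hphat : ∀ z, phat z = (1 / (N : ℝ)) * ∑ i, p (x i) z)
    (phatk : Fin K → Fin m → ℝ)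
    (hphatk : ∀ k z, phatk k z = (1 / (M : ℝ)) * ∑ i ∈ B k, p (x i) z)
    (lN : (Fin d → ℝ) → ℝ)
    (hlN : ∀ θ, lN θ =
      (1 / (N : ℝ)) * ∑ i, ∑ z, ∑ z',
        p (x i) z * q θ (y i) z' *
          Real.log ((phat z * qhat θ z') / (p (x i) z * q θ (y i) z')))
    (lk : Fin K → (Fin d → ℝ) → ℝ)
    (hlk : ∀ k θ, lk k θ =
      (1 / (M : ℝ)) * ∑ i ∈ B k, ∑ z, ∑ z',
        p (x i) z * q θ (y i) z' *
          Real.log ((phatk k z * qhatk k θ z') / (p (x i) z * q θ (y i) z')))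
    (θ : Fin d → ℝ)
    (eps : Fin K → Fin m → Fin m → ℝ)
    (heps : ∀ k z z', eps k z z' =
      (1 / (K : ℝ)) * ∑ i, p (x i) z * q θ (y i) z' / qhat θ z'
      - ∑ i ∈ B k, p (x i) z * q θ (y i) z' / qhatk k θ z') :
    fderiv ℝ lN θ - (1 / (K : ℝ)) • ∑ k, fderiv ℝ (lk k) θ
      = (1 / (N : ℝ)) • ∑ k, ∑ z, ∑ z',
          (eps k z z' • fderiv ℝ (fun θ' => qhatk k θ' z') θ
           + Real.log ((phat z * qhat θ z') / (phatk k z * qhatk k θ z')) •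
               ∑ i ∈ B k, p (x i) z • fderiv ℝ (fun θ' => q θ' (y i) z') θ) := by
  have hN0 : 0 < (N:ℝ) := by exact_mod_cast Nat.lt_of_lt_of_le Nat.zero_lt_one hN
  have hM0 : 0 < (M:ℝ):= by exact_mod_cast Nat.lt_of_lt_of_le Nat.zero_lt_one hM
  have hK0 : 0 < (K:ℝ) := by exact_mod_cast Nat.lt_of_lt_of_le Nat.zero_lt_one hK
  have hNfin : 0 < N := hN
  have hpart : ∀ φ : Fin N → ℝ, ∑ i, φ i = ∑ k, ∑ i ∈ B k, φ i := by
    intro φ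
    rw [← hBcover, Finset.sum_biUnion]
    intro k _ k' _ hkk'
    exact hBdisj k k' hkk'
  have hBne : ∀ k, (B k).Nonempty := by
    intro k
    rw [← Finset.card_pos, hBcard k]
    exact hM
  -- derivatives of individual q's
  have hq' : ∀ (i : Fin N) (z' : Fin m),
      HasFDerivAt (fun θ' => q θ' (y i) z') (fderiv ℝ (fun θ' => q θ' (y i) z') θ) θ :=
    fun i z' => ((hqdiff (y i) z') θ).hasFDerivAt
  -- positivity of the marginals (for all θ')
  have hqhatpos : ∀ t (z' : Fin m), 0 < qhat t z' := by
    intro t z'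
    rw [hqhat]
    have : 0 < ∑ i, q t (y i) z' :=
      Finset.sum_pos (fun i _ => hqpos t (y i) z') ⟨⟨0, hNfin⟩, Finset.mem_univ _⟩
    positivity
  have hqhatkpos : ∀ k t (z' : Fin m), 0 < qhatk k t z' := by
    intro k t z'
    rw [hqhatk]
    have : 0 < ∑ i ∈ B k, q t (y i) z' :=
      Finset.sum_pos (fun i _ => hqpos t (y i) z') (hBne k)
    positivity
  have hphatpos : ∀ z, 0 < phat z := by
    intro z
    rw [hphat]
    have : 0 < ∑ i, p (x i) z :=
      Finset.sum_pos (fun i _ => hppos (x i) z) ⟨⟨0, hNfin⟩, Finset.mem_univ _⟩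
    positivity
  have hphatkpos : ∀ k z, 0 < phatk k z := by
    intro k z
    rw [hphatk]
    have : 0 < ∑ i ∈ B k, p (x i) z :=
      Finset.sum_pos (fun i _ => hppos (x i) z) (hBne k)
    positivity
  -- derivatives of the marginals
  have hDqh : ∀ z' : Fin m, HasFDerivAt (fun θ' => qhat θ' z')
      ((1/(N:ℝ)) • ∑ i, fderiv ℝ (fun θ' => q θ' (y i) z') θ) θ := by
    intro z'
    have : (fun θ' => qhat θ' z') = fun θ' => (1/(N:ℝ)) * ∑ i, q θ' (y i) z' :=
      funext fun θ' => hqhat θ' z'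
    rw [this]
    exact (HasFDerivAt.fun_sum fun i _ => hq' i z').const_mul _
  have hDqk : ∀ (k : Fin K) (z' : Fin m), HasFDerivAt (fun θ' => qhatk k θ' z')
      ((1/(M:ℝ)) • ∑ i ∈ B k, fderiv ℝ (fun θ' => q θ' (y i) z') θ) θ := by
    intro k z'
    have : (fun θ' => qhatk k θ' z') = fun θ' => (1/(M:ℝ)) * ∑ i ∈ B k, q θ' (y i) z' :=
      funext fun θ' => hqhatk k θ' z'
    rw [this]
    exact (HasFDerivAt.fun_sum fun i _ => hq' i z').const_mul _
  -- derivative of lN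
  have hLN : fderiv ℝ lN θ = (1/(N:ℝ)) • ∑ i, ∑ z, ∑ z',
      ((p (x i) z * Real.log (phat z * qhat θ z' / (p (x i) z * q θ (y i) z')) - p (x i) z)
          • fderiv ℝ (fun θ' => q θ' (y i) z') θ
        + (p (x i) z * q θ (y i) z' / qhat θ z')
          • ((1/(N:ℝ)) • ∑ j, fderiv ℝ (fun θ' => q θ' (y j) z') θ)) := by
    rw [show lN = fun θ' => (1 / (N : ℝ)) * ∑ i, ∑ z, ∑ z',
        p (x i) z * q θ' (y i) z' *
          Real.log ((phat z * qhat θ' z') / (p (x i) z * q θ' (y i) z')) from funext hlN]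
    refine HasFDerivAt.fderiv ?_
    exact HasFDerivAt.const_mul (HasFDerivAt.fun_sum fun i _ => HasFDerivAt.fun_sum fun z _ =>
      HasFDerivAt.fun_sum fun z' _ =>
        brown_aux (hppos (x i) z) (hphatpos z) (fun t => hqpos t (y i) z')
          (fun t => hqhatpos t z') (hq' i z') (hDqh z')) _
  -- derivative of lk
  have hLk : ∀ k, fderiv ℝ (lk k) θ = (1/(M:ℝ)) • ∑ i ∈ B k, ∑ z, ∑ z',
      ((p (x i) z * Real.log (phatk k z * qhatk k θ z' / (p (x i) z * q θ (y i) z')) - p (x i) z)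
          • fderiv ℝ (fun θ' => q θ' (y i) z') θ
        + (p (x i) z * q θ (y i) z' / qhatk k θ z')
          • ((1/(M:ℝ)) • ∑ j ∈ B k, fderiv ℝ (fun θ' => q θ' (y j) z') θ)) := by
    intro k
    rw [show lk k = fun θ' => (1 / (M : ℝ)) * ∑ i ∈ B k, ∑ z, ∑ z',
        p (x i) z * q θ' (y i) z' *
          Real.log ((phatk k z * qhatk k θ' z') / (p (x i) z * q θ' (y i) z')) from
        funext (hlk k)]
    refine HasFDerivAt.fderiv ?_
    exact HasFDerivAt.const_mul (HasFDerivAt.fun_sum fun i _ => HasFDerivAt.fun_sum fun z _ =>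
      HasFDerivAt.fun_sum fun z' _ =>
        brown_aux (hppos (x i) z) (hphatkpos k z) (fun t => hqpos t (y i) z')
          (fun t => hqhatkpos k t z') (hq' i z') (hDqk k z')) _
  have hfqk : ∀ (k : Fin K) (z' : Fin m), fderiv ℝ (fun θ' => qhatk k θ' z') θ
      = (1/(M:ℝ)) • ∑ i ∈ B k, fderiv ℝ (fun θ' => q θ' (y i) z') θ :=
    fun k z' => (hDqk k z').fderiv
  rw [hLN]
  simp only [hLk, hfqk, heps]
  ext v
  simp only [ContinuousLinearMap.coe_sub', Pi.sub_apply, ContinuousLinearMap.smul_apply,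
    ContinuousLinearMap.sum_apply, ContinuousLinearMap.add_apply, smul_eq_mul]
  exact brown_key N M hM0 hK0 (by exact_mod_cast hNMK) B hpart
    (fun i z => p (x i) z) (fun i z' => q θ (y i) z')
    (fun i z' => (fderiv ℝ (fun θ' => q θ' (y i) z') θ) v)
    phat (qhat θ) phatk (fun k => qhatk k θ)
    (fun i z => hppos (x i) z) (fun i z' => hqpos θ (y i) z')
    hphatpos (fun z' => hqhatpos θ z') hphatkpos (fun k z' => hqhatkpos k θ z')
end
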